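/- arXiv:2009.06329 — 3 statements merged into one kernel-verified Lean document; each statement's English description precedes it below -/
import Mathlib

section
/- Let V be a nonzero real inner product space, let k ≥ 1, let γ_1, …, γ_k > 0 be positive reals and γ < 0 a negative real. Then the quadratic form on V^k given by (Y_1, …, Y_k) ↦ Σ_{i=1}^k γ_i ‖Y_i‖² + γ^{-1} ‖Σ_{i=1}^k γ_i Y_i‖² is positive definite if and only if γ + Σ_{i=1}^k γ_i < 0. -/
open RealInnerProductSpace

/-- The quadratic form `(Y₁,…,Y_k) ↦ ∑ γᵢ‖Yᵢ‖² + γ⁻¹‖∑ γᵢ Yᵢ‖²` on `V^k`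
(with all `γᵢ > 0` and `γ < 0`) is positive definite iff `γ + ∑ γᵢ < 0`. -/
theorem stmt0 {V : Type*} [NormedAddCommGroup V] [InnerProductSpace ℝ V] [Nontrivial V]
    (k : ℕ) (hk : 1 ≤ k) (γi : Fin k → ℝ) (hγi : ∀ i, 0 < γi i) (γ : ℝ) (hγ : γ < 0) :
    (∀ Y : Fin k → V, Y ≠ 0 →
        0 < (∑ i, γi i * ‖Y i‖ ^ 2) + γ⁻¹ * ‖∑ i, γi i • Y i‖ ^ 2) ↔
      γ + ∑ i, γi i < 0 := by
  have hS : 0 < ∑ i, γi i :=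
    Finset.sum_pos (fun i _ => hγi i) ⟨⟨0, hk⟩, Finset.mem_univ _⟩
  have hinv : γ⁻¹ < 0 := inv_neg''.2 hγ
  constructor
  · intro h
    obtain ⟨v, hv⟩ := exists_ne (0 : V)
    have hY : (fun _ : Fin k => v) ≠ 0 := fun hc => hv (congrFun hc ⟨0, hk⟩)
    have h1 := h (fun _ => v) hY
    rw [← Finset.sum_smul, norm_smul, Real.norm_eq_abs, abs_of_pos hS,
      ← Finset.sum_mul] at h1
    have hv2 : 0 < ‖v‖ ^ 2 := pow_pos (norm_pos_iff.2 hv) 2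
    have h2 : 0 < 1 + γ⁻¹ * ∑ i, γi i := by
      nlinarith [mul_pos hS hv2, h1]
    nlinarith [mul_inv_cancel₀ hγ.ne, h2, hγ]
  · intro hsum Y hY
    set S := ∑ i, γi i with hSdef
    set A := ∑ i, γi i * ‖Y i‖ ^ 2 with hA
    have hApos : 0 < A := by
      obtain ⟨j, hj⟩ := Function.ne_iff.1 hY
      refine Finset.sum_pos' (fun i _ => mul_nonneg (hγi i).le (sq_nonneg _))
        ⟨j, Finset.mem_univ _, mul_pos (hγi j) (pow_pos (norm_pos_iff.2 hj) 2)⟩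
    have hN : ‖∑ i, γi i • Y i‖ ≤ ∑ i, γi i * ‖Y i‖ := by
      refine (norm_sum_le _ _).trans_eq ?_
      refine Finset.sum_congr rfl fun i _ => ?_
      rw [norm_smul, Real.norm_eq_abs, abs_of_pos (hγi i)]
    have hCS : (∑ i, γi i * ‖Y i‖) ^ 2 ≤ S * A := by
      have := Finset.sum_mul_sq_le_sq_mul_sq Finset.univ
        (fun i => Real.sqrt (γi i)) (fun i => Real.sqrt (γi i) * ‖Y i‖)
      have e1 : ∀ i : Fin k, Real.sqrt (γi i) * (Real.sqrt (γi i) * ‖Y i‖)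
          = γi i * ‖Y i‖ := fun i => by
        rw [← mul_assoc, Real.mul_self_sqrt (hγi i).le]
      have e2 : ∀ i : Fin k, Real.sqrt (γi i) ^ 2 = γi i := fun i =>
        Real.sq_sqrt (hγi i).le
      have e3 : ∀ i : Fin k, (Real.sqrt (γi i) * ‖Y i‖) ^ 2 = γi i * ‖Y i‖ ^ 2 :=
        fun i => by rw [mul_pow, e2]
      simp only [e1, e2, e3] at this
      exact this
    have hN2 : ‖∑ i, γi i • Y i‖ ^ 2 ≤ S * A := by
      refine le_trans ?_ hCS
      have h0 : (0:ℝ) ≤ ‖∑ i, γi i • Y i‖ := norm_nonneg _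
      exact pow_le_pow_left₀ h0 hN 2
    have key : γ⁻¹ * (S * A) ≤ γ⁻¹ * ‖∑ i, γi i • Y i‖ ^ 2 :=
      mul_le_mul_of_nonpos_left hN2 hinv.le
    nlinarith [mul_inv_cancel₀ hγ.ne, key, hApos, hsum, hS]
end

section
/- Let w ∈ ℂ² be nonzero, let μ ∈ ℂ, and let ρ, t ∈ ℝ. Let J denote the 2 × 2 matrix with rows (0, 1) and (−1, 0), and let w̄ denote componentwise complex conjugation of w. Then there exists F ∈ su(2) (a 2 × 2 traceless skew-Hermitian complex matrix) such that F w + ρ μ J w̄ + ρ t i w = 0. -/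
open Matrix

/-- For nonzero `w ∈ ℂ²`, `μ ∈ ℂ`, `ρ, t ∈ ℝ`, there exists `F ∈ su(2)`
(traceless skew-Hermitian) with `F w + ρ μ J w̄ + ρ t i w = 0`, where
`J = [[0,1],[-1,0]]`. -/
theorem stmt8 (w : Fin 2 → ℂ) (hw : w ≠ 0) (μ : ℂ) (ρ t : ℝ) :
    ∃ F : Matrix (Fin 2) (Fin 2) ℂ, Fᴴ = -F ∧ F.trace = 0 ∧
      F.mulVec w + ((ρ : ℂ) * μ) • (!![0, 1; -1, 0] : Matrix (Fin 2) (Fin 2) ℂ).mulVec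
          (fun j => starRingEnd ℂ (w j)) + ((ρ : ℂ) * (t : ℂ) * Complex.I) • w = 0 := by
  set c1 := w 0 with hc1
  set c2 := w 1 with hc2
  set d1 := starRingEnd ℂ c1 with hd1
  set d2 := starRingEnd ℂ c2 with hd2
  set n : ℂ := c1 * d1 + c2 * d2 with hn
  have hd1' : starRingEnd ℂ d1 = c1 := by rw [hd1]; exact Complex.conj_conj c1
  have hd2' : starRingEnd ℂ d2 = c2 := by rw [hd2]; exact Complex.conj_conj c2
  have hnconj : starRingEnd ℂ n = n := by
    rw [hn, map_add, _root_.map_mul, _root_.map_mul, hd1', hd2, hd2', hd1]; ring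
  have hnne : n ≠ 0 := by
    have heq : n = ((Complex.normSq c1 + Complex.normSq c2 : ℝ) : ℂ) := by
      rw [hn, hd1, hd2, Complex.mul_conj, Complex.mul_conj]; push_cast; ring
    rw [heq]
    intro h
    have h' : Complex.normSq c1 + Complex.normSq c2 = 0 := by exact_mod_cast h
    have hz1 : c1 = 0 := Complex.normSq_eq_zero.mp (by nlinarith [Complex.normSq_nonneg c1, Complex.normSq_nonneg c2])
    have hz2 : c2 = 0 := Complex.normSq_eq_zero.mp (by nlinarith [Complex.normSq_nonneg c1, Complex.normSq_nonneg c2])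
    apply hw
    funext i
    fin_cases i
    · exact hz1
    · exact hz2
  set A : ℂ := ((ρ : ℂ) * t * Complex.I * (c2 * d2 - c1 * d1)
      + (ρ : ℂ) * (starRingEnd ℂ μ * c1 * c2 - μ * d1 * d2)) / n with hA
  set Z : ℂ := (-(ρ : ℂ) * μ * d2 ^ 2 - (ρ : ℂ) * starRingEnd ℂ μ * c1 ^ 2
      - 2 * (ρ : ℂ) * t * Complex.I * c1 * d2) / n with hZ
  have hAconj : starRingEnd ℂ A = -A := by
    rw [hA, map_div₀, hnconj, ← neg_div]
    congr 1
    simp only [map_add, map_sub, _root_.map_mul, hd1', hd2', Complex.conj_conj,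
      Complex.conj_I, Complex.conj_ofReal]
    ring
  have hZconj : starRingEnd ℂ Z = (-(ρ : ℂ) * starRingEnd ℂ μ * c2 ^ 2
      - (ρ : ℂ) * μ * d1 ^ 2 + 2 * (ρ : ℂ) * t * Complex.I * d1 * c2) / n := by
    rw [hZ, map_div₀, hnconj]
    congr 1
    simp only [map_add, map_sub, _root_.map_mul, map_neg, _root_.map_pow, map_ofNat, hd1', hd2',
      Complex.conj_conj, Complex.conj_I, Complex.conj_ofReal]
    ring
  refine ⟨!![A, Z; -starRingEnd ℂ Z, -A], ?_, ?_, ?_⟩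
  · ext i j
    fin_cases i <;> fin_cases j <;>
      simp [Matrix.conjTranspose_apply, hAconj]
  · simp [Matrix.trace_fin_two]
  · funext i
    fin_cases i <;>
      simp only [Pi.add_apply, Pi.smul_apply, Pi.zero_apply, smul_eq_mul, mulVec,
        dotProduct, Fin.sum_univ_two, Matrix.cons_val', Matrix.cons_val_zero,
        Matrix.cons_val_one, Matrix.head_cons, Matrix.empty_val',
        Matrix.cons_val_fin_one, Matrix.head_fin_const, Matrix.of_apply, Fin.zero_eta, Fin.mk_one, ← hc1, ← hc2, ← hd1, ← hd2]
    · rw [hA, hZ]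
      field_simp
      ring
    · rw [hZconj, hA]
      field_simp
      ring
end

section
/- Let G be a compact connected semisimple Lie group with Lie algebra g, and let H ⊆ G be a closed subgroup with Lie algebra h, with reductive decomposition g = h ⊕ p. Suppose the invariant metric determined by a positive Ad(H)-equivariant symmetric endomorphism A : p → p is geodesic orbit, i.e., for every X ∈ p there is Z ∈ h with [X + Z, AX] = 0 (brackets in g, A extended by 0 on h). If X ∈ p is an eigenvector of A with eigenvalue α_i, Y ∈ p is an eigenvector with eigenvalue α_j, and α_i ≠ α_j, then there exists Z ∈ h such that [X, Y] = (α_i/(α_i − α_j))[Z, X] + (α_j/(α_i − α_j))[Z, Y]. -/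
/-- Geodesic-orbit spaces, Lie-algebra form (Lemma on brackets of eigenvectors):
let `g = h ⊕ p` be a reductive decomposition and `A : p → p` the metric
endomorphism of a geodesic orbit metric, i.e. for every `X ∈ p` there is
`Z ∈ h` with `[X + Z, AX] = 0`.  If `X, Y ∈ p` are eigenvectors of `A` with
distinct eigenvalues `αᵢ ≠ αⱼ`, then there is `Z ∈ h` with
`[X, Y] = (αᵢ/(αᵢ-αⱼ))[Z, X] + (αⱼ/(αᵢ-αⱼ))[Z, Y]`. -/
theorem stmt14 {g : Type*} [LieRing g] [LieAlgebra ℝ g]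
    (h p : Submodule ℝ g) (hcompl : IsCompl h p)
    (A : p →ₗ[ℝ] p)
    (hGO : ∀ X : p, ∃ Z ∈ h, ⁅(X : g) + Z, (A X : g)⁆ = 0)
    (X Y : p) (αi αj : ℝ) (hX : A X = αi • X) (hY : A Y = αj • Y)
    (hij : αi ≠ αj) :
    ∃ Z ∈ h, ⁅(X : g), (Y : g)⁆ =
      (αi / (αi - αj)) • ⁅Z, (X : g)⁆ + (αj / (αi - αj)) • ⁅Z, (Y : g)⁆ := by
  obtain ⟨Z, hZ, hz⟩ := hGO (X + Y)
  refine ⟨Z, hZ, ?_⟩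
  have hA : A (X + Y) = αi • X + αj • Y := by rw [map_add, hX, hY]
  rw [hA] at hz
  push_cast at hz
  have key : (αi - αj) • ⁅(X : g), (Y : g)⁆ =
      αi • ⁅Z, (X : g)⁆ + αj • ⁅Z, (Y : g)⁆ := by
    have h2 := hz
    simp only [lie_add, add_lie, lie_smul, lie_self, smul_zero, zero_add, add_zero] at h2
    have h3 : ⁅(Y : g), (X : g)⁆ = -⁅(X : g), (Y : g)⁆ := (lie_skew _ _).symm
    rw [h3] at h2
    linear_combination (norm := module) -h2
  have hd : αi - αj ≠ 0 := sub_ne_zero.mpr hij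
  have := congrArg (fun v => (αi - αj)⁻¹ • v) key
  simp only [smul_smul, inv_mul_cancel₀ hd, one_smul, smul_add, div_eq_inv_mul] at this ⊢
  exact this
end
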